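/- Let $m>0$ and let $a\in\mathbb{Z}$ be an integer. Then $\int_{0}^{m} e^{-m^2/t^2}\, t^{a-1}\, dt \;\le\; m^{a}\,\sqrt{\max(-a,0)!}$. -/

import Mathlib

open Real MeasureTheory intervalIntegral Set

lemma pow_div_fact_le_exp {x : ℝ} (hx : 0 ≤ x) (n : ℕ) : x ^ n / n.factorial ≤ Real.exp x := by
  calc x ^ n / n.factorial = ∑ i ∈ Finset.range (n+1), (if i = n then x ^ i / i.factorial else 0) := by
        simp
    _ ≤ ∑ i ∈ Finset.range (n+1), x ^ i / i.factorial := by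
        apply Finset.sum_le_sum
        intro i _
        split
        · exact le_refl _
        · positivity
    _ ≤ Real.exp x := Real.sum_le_exp_of_nonneg hx _

lemma exp_neg_le {x : ℝ} (hx : 0 < x) (n : ℕ) : Real.exp (-x) ≤ n.factorial / x ^ n := by
  have h1 := pow_div_fact_le_exp hx.le n
  rw [Real.exp_neg, inv_eq_one_div, div_le_div_iff₀ (Real.exp_pos x) (by positivity)]
  rw [div_le_iff₀ (by positivity : (0:ℝ) < (n.factorial:ℝ))] at h1
  nlinarith [Real.exp_pos x]

-- pointwise bound
lemma ptbd {m : ℝ} (hm : 0 < m) {t : ℝ} (ht : t ∈ Set.Ioc 0 m) (b : ℤ) (n : ℕ)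
    (h : 0 ≤ 2 * (n:ℤ) + b) :
    Real.exp (-m ^ 2 / t ^ 2) * t ^ b ≤ n.factorial * m ^ b := by
  have ht0 : 0 < t := ht.1
  have hx : 0 < m ^ 2 / t ^ 2 := by positivity
  have h1 : Real.exp (-m ^ 2 / t ^ 2) ≤ n.factorial * (t ^ 2 / m ^ 2) ^ n := by
    have := exp_neg_le hx n
    rw [← neg_div] at this
    refine this.trans_eq ?_
    rw [div_pow, div_div_eq_mul_div, div_pow]
    ring
  have h2 : Real.exp (-m ^ 2 / t ^ 2) * t ^ b ≤ n.factorial * (t ^ 2 / m ^ 2) ^ n * t ^ b := by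
    apply mul_le_mul_of_nonneg_right h1 (zpow_nonneg ht0.le b)
  refine h2.trans ?_
  have key : (t ^ 2 / m ^ 2) ^ n * t ^ b ≤ m ^ b := by
    rw [div_pow, ← pow_mul, ← pow_mul, div_mul_eq_mul_div, div_le_iff₀ (by positivity)]
    have e1 : t ^ (2 * n) * t ^ b = t ^ (2 * (n:ℤ) + b) := by
      rw [← zpow_natCast t (2*n), ← zpow_add₀ ht0.ne']
      norm_num
    have e2 : m ^ b * m ^ (2 * n) = m ^ (2 * (n:ℤ) + b) := by
      rw [← zpow_natCast m (2*n), ← zpow_add₀ hm.ne']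
      congr 1
      push_cast
      ring
    rw [e1, e2]
    -- t ^ c ≤ m ^ c for 0 ≤ c, 0 < t ≤ m
    obtain ⟨c, hc⟩ : ∃ c : ℕ, 2 * (n:ℤ) + b = c := ⟨(2*(n:ℤ)+b).toNat, (Int.toNat_of_nonneg h).symm⟩
    rw [hc, zpow_natCast, zpow_natCast]
    exact pow_le_pow_left₀ ht0.le ht.2 c
  calc (n.factorial : ℝ) * (t ^ 2 / m ^ 2) ^ n * t ^ b
      = n.factorial * ((t ^ 2 / m ^ 2) ^ n * t ^ b) := by ring
    _ ≤ n.factorial * m ^ b := by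
        apply mul_le_mul_of_nonneg_left key (by positivity)

lemma f_meas (m : ℝ) (b : ℤ) : Measurable (fun t : ℝ => Real.exp (-m ^ 2 / t ^ 2) * t ^ b) := by
  fun_prop

lemma f_intble {m : ℝ} (hm : 0 < m) (b : ℤ) :
    IntervalIntegrable (fun t : ℝ => Real.exp (-m ^ 2 / t ^ 2) * t ^ b) volume 0 m := by
  rw [intervalIntegrable_iff_integrableOn_Ioc_of_le hm.le]
  apply MeasureTheory.Integrable.mono' (g := fun _ => ((-b).toNat.factorial : ℝ) * m ^ b)
    (integrableOn_const measure_Ioc_lt_top.ne)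
    ((f_meas m b).aestronglyMeasurable.restrict)
  · filter_upwards [MeasureTheory.ae_restrict_mem measurableSet_Ioc] with t ht
    have h0 : (0:ℝ) ≤ Real.exp (-m ^ 2 / t ^ 2) * t ^ b :=
      mul_nonneg (Real.exp_pos _).le (zpow_nonneg ht.1.le b)
    rw [Real.norm_eq_abs, abs_of_nonneg h0]
    exact ptbd hm ht b (-b).toNat (by omega)

lemma intle {m : ℝ} (hm : 0 < m) (b : ℤ) (n : ℕ) (h : 0 ≤ 2 * (n:ℤ) + b) (hn : 1 ≤ n) :
    ∫ t in (0:ℝ)..m, Real.exp (-m ^ 2 / t ^ 2) * t ^ b ≤ n.factorial * m ^ b * m := by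
  have := intervalIntegral.integral_mono_on (a := (0:ℝ)) (b := m) (f := fun t => Real.exp (-m ^ 2 / t ^ 2) * t ^ b)
    (g := fun _ => (n.factorial : ℝ) * m ^ b) hm.le (f_intble hm b) intervalIntegrable_const ?_
  · calc _ ≤ _ := this
    _ = (n.factorial : ℝ) * m ^ b * m := by
      rw [intervalIntegral.integral_const]
      simp [mul_comm]
  · intro t ht
    rcases eq_or_lt_of_le ht.1 with h0 | h0
    · -- t = 0
      subst h0
      rcases eq_or_ne b 0 with rfl | hb
      · simp only [zpow_zero, mul_one]
        have h00 : -m ^ 2 / (0:ℝ) ^ 2 = 0 := by norm_num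
        rw [h00, Real.exp_zero]
        exact_mod_cast Nat.one_le_iff_ne_zero.2 n.factorial_ne_zero
      · simp only [zero_zpow b hb, mul_zero]
        positivity
    · exact ptbd hm ⟨h0, ht.2⟩ b n h

lemma ftc_id {m : ℝ} (hm : 0 < m) (j : ℕ) :
    (∫ t in (0:ℝ)..m, (2*m^2 * (Real.exp (-m^2/t^2) * t ^ (-(j:ℤ)-3))
        - (j:ℝ) * (Real.exp (-m^2/t^2) * t ^ (-(j:ℤ)-1))))
      = Real.exp (-1) * m ^ (-(j:ℤ)) := by
  set g : ℝ → ℝ := fun t => 2*m^2 * (Real.exp (-m^2/t^2) * t ^ (-(j:ℤ)-3))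
        - (j:ℝ) * (Real.exp (-m^2/t^2) * t ^ (-(j:ℤ)-1)) with hg
  set F : ℝ → ℝ := fun t => if t = 0 then 0 else Real.exp (-m^2/t^2) * t ^ (-(j:ℤ)) with hFdef
  have hderiv : ∀ t ∈ Set.Ioo (0:ℝ) m, HasDerivAt F (g t) t := by
    intro t ht
    have ht0 : t ≠ 0 := ht.1.ne'
    have h1 : HasDerivAt (fun s : ℝ => -m^2 * s ^ (-2:ℤ)) (-m^2 * ((-2) * t ^ (-3:ℤ))) t := by
      have h := (hasDerivAt_zpow (-2) t (Or.inl ht0)).const_mul (-m^2)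
      exact h.congr_deriv (by norm_num)
    have h1' : HasDerivAt (fun s : ℝ => -m^2 / s ^ 2) (-m^2 * ((-2) * t ^ (-3:ℤ))) t := by
      refine h1.congr_of_eventuallyEq (Filter.Eventually.of_forall fun s => ?_)
      show -m ^ 2 / s ^ 2 = -m ^ 2 * s ^ (-2:ℤ)
      rw [div_eq_mul_inv, zpow_neg]
      norm_num
    have h2 := h1'.exp
    have h3 := hasDerivAt_zpow (-(j:ℤ)) t (Or.inl ht0)
    have h4 := h2.mul h3
    have hFeq : F =ᶠ[nhds t] fun s => Real.exp (-m^2/s^2) * s ^ (-(j:ℤ)) := by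
      filter_upwards [eventually_ne_nhds ht0] with s hs
      simp [hFdef, hs]
    refine (h4.congr_of_eventuallyEq hFeq).congr_deriv ?_
    rw [hg]
    have e3 : t ^ (-(j:ℤ)-3) = t ^ (-3:ℤ) * t ^ (-(j:ℤ)) := by
      rw [← zpow_add₀ ht0]; ring_nf
    push_cast
    rw [e3]
    ring
  have hcont : ContinuousOn F (Set.Icc 0 m) := by
    intro t ht
    rcases eq_or_ne t 0 with rfl | ht0
    · have hF0 : F 0 = 0 := by simp [hFdef]
      have key : Filter.Tendsto F (nhdsWithin 0 (Set.Icc 0 m)) (nhds 0) := by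
        apply squeeze_zero' (g := fun x => ((j+1).factorial * m ^ (-(j:ℤ)-1)) * x)
        · filter_upwards [eventually_mem_nhdsWithin] with x hx
          rcases eq_or_ne x 0 with rfl | hx0
          · simp [hFdef]
          · have hxpos : 0 < x := lt_of_le_of_ne hx.1 (Ne.symm hx0)
            simp only [hFdef, if_neg hx0]
            positivity
        · filter_upwards [eventually_mem_nhdsWithin] with x hx
          rcases eq_or_ne x 0 with rfl | hx0
          · simp [hFdef]
          · have hxpos : 0 < x := lt_of_le_of_ne hx.1 (Ne.symm hx0)
            have e : x ^ (-(j:ℤ)) = x ^ (-(j:ℤ)-1) * x := by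
              rw [← zpow_add_one₀ hx0]
              norm_num
            simp only [hFdef, if_neg hx0, e, ← mul_assoc]
            apply mul_le_mul_of_nonneg_right _ hxpos.le
            exact ptbd hm ⟨hxpos, hx.2⟩ (-(j:ℤ)-1) (j+1) (by push_cast; omega)
        · have hc : Continuous (fun x : ℝ => ((((j+1).factorial : ℕ) : ℝ) * m ^ (-(j:ℤ)-1)) * x) :=
            continuous_const.mul continuous_id
          have := (hc.tendsto 0).mono_left (nhdsWithin_le_nhds (s := Set.Icc 0 m))
          simpa using this
      simpa [ContinuousWithinAt, hF0] using key
    · apply ContinuousAt.continuousWithinAt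
      have hsm : ContinuousAt (fun s : ℝ => Real.exp (-m^2/s^2) * s ^ (-(j:ℤ))) t := by
        exact ((Real.continuous_exp.continuousAt.comp
          (continuousAt_const.div ((continuous_pow 2).continuousAt) (pow_ne_zero 2 ht0))).mul
          (continuousAt_zpow₀ t (-(j:ℤ)) (Or.inl ht0)))
      apply hsm.congr
      filter_upwards [eventually_ne_nhds ht0] with s hs
      simp [hFdef, hs]
  have hint : IntervalIntegrable g volume 0 m := by
    rw [hg]
    exact ((f_intble hm (-(j:ℤ)-3)).const_mul (2*m^2)).sub ((f_intble hm (-(j:ℤ)-1)).const_mul (j:ℝ))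
  have hftc := intervalIntegral.integral_eq_sub_of_hasDeriv_right_of_le hm.le hcont
    (fun t ht => (hderiv t ht).hasDerivWithinAt) hint
  rw [show (∫ t in (0:ℝ)..m, (2*m^2 * (Real.exp (-m^2/t^2) * t ^ (-(j:ℤ)-3))
        - (j:ℝ) * (Real.exp (-m^2/t^2) * t ^ (-(j:ℤ)-1)))) = ∫ t in (0:ℝ)..m, g t from rfl, hftc]
  have hFm : F m = Real.exp (-1) * m ^ (-(j:ℤ)) := by
    simp only [hFdef, if_neg hm.ne']
    rw [show -m^2/m^2 = (-1 : ℝ) by field_simp]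
  have hF0 : F 0 = 0 := by simp [hFdef]
  rw [hFm, hF0, sub_zero]

lemma main_nat {m : ℝ} (hm : 0 < m) : ∀ k : ℕ,
    (∫ t in (0:ℝ)..m, Real.exp (-m ^ 2 / t ^ 2) * t ^ (-(k:ℤ)-1))
      ≤ m ^ (-(k:ℤ)) * Real.sqrt (k.factorial) := by
  intro k
  induction k using Nat.strong_induction_on with
  | _ k ih =>
    match k, ih with
    | 0, _ =>
      have := intle hm (-1) 1 (by norm_num) le_rfl
      refine this.trans ?_
      norm_num
      rw [inv_mul_cancel₀ hm.ne']
    | 1, _ =>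
      have := intle hm (-2) 1 (by norm_num) le_rfl
      refine this.trans (le_of_eq ?_)
      have h1 : (Nat.factorial 1 : ℝ) = 1 := by norm_num
      rw [h1, Real.sqrt_one, one_mul, mul_one,
        show (-2:ℤ) = -1 + -1 from by ring, zpow_add₀ hm.ne', zpow_neg_one,
        mul_assoc, inv_mul_cancel₀ hm.ne', mul_one]
      norm_num
    | (j+2), ih =>
      have ihj := ih j (by omega)
      have hid := ftc_id hm j
      have h3i := (f_intble hm (-(j:ℤ)-3)).const_mul (2*m^2)
      have h1i := (f_intble hm (-(j:ℤ)-1)).const_mul (j:ℝ)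
      rw [intervalIntegral.integral_sub h3i h1i, intervalIntegral.integral_const_mul,
        intervalIntegral.integral_const_mul] at hid
      set I3 := ∫ t in (0:ℝ)..m, Real.exp (-m ^ 2 / t ^ 2) * t ^ (-(j:ℤ)-3) with hI3
      set I1 := ∫ t in (0:ℝ)..m, Real.exp (-m ^ 2 / t ^ 2) * t ^ (-(j:ℤ)-1) with hI1
      set X := Real.sqrt (j.factorial) with hX
      have hfac1 : (1:ℝ) ≤ (j.factorial : ℝ) := by exact_mod_cast j.factorial_pos
      have hX1 : 1 ≤ X := by
        rw [hX, show (1:ℝ) = Real.sqrt 1 from (Real.sqrt_one).symm]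
        exact Real.sqrt_le_sqrt hfac1
      have hsqrt : ((j:ℝ)+1) * X ≤ Real.sqrt ((j+2).factorial) := by
        have e1 : ((j:ℝ)+1) * X = Real.sqrt (((j:ℝ)+1)^2 * j.factorial) := by
          rw [Real.sqrt_mul (by positivity), Real.sqrt_sq (by positivity)]
        rw [e1]
        apply Real.sqrt_le_sqrt
        have : ((j+2).factorial : ℝ) = ((j:ℝ)+2) * (((j:ℝ)+1) * j.factorial) := by
          rw [show j+2 = (j+1)+1 from rfl, Nat.factorial_succ, Nat.factorial_succ]
          push_cast; ring
        rw [this]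
        nlinarith [j.factorial_pos, hfac1]
      -- exponent normalizations
      have ecast : ∀ t : ℝ, t ^ (-((j+2:ℕ):ℤ)-1) = t ^ (-(j:ℤ)-3) := by
        intro t; congr 1; push_cast; ring
      have emcast : m ^ (-((j+2:ℕ):ℤ)) = m ^ (-(j:ℤ)) / m^2 := by
        rw [show -((j+2:ℕ):ℤ) = -(j:ℤ) - 2 from by push_cast; ring, zpow_sub₀ hm.ne']
        congr 1
      simp only [ecast, emcast]
      rw [← hI3]
      -- from hid : 2*m^2 * I3 - j*I1 = exp(-1) * m^(-j)
      have hP : (0:ℝ) < m ^ (-(j:ℤ)) := zpow_pos hm _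
      have hexp : Real.exp (-1) ≤ 1 := by
        rw [show (1:ℝ) = Real.exp 0 from (Real.exp_zero).symm]
        exact Real.exp_le_exp.mpr (by norm_num)
      have hm2 : (0:ℝ) < m^2 := by positivity
      rw [div_mul_eq_mul_div, le_div_iff₀ hm2]
      -- goal : I3 * m^2 ≤ m^(-j) * sqrt ((j+2)!)
      nlinarith [mul_le_mul_of_nonneg_left ihj (by positivity : (0:ℝ) ≤ (j:ℝ)),
        mul_le_mul_of_nonneg_right hexp hP.le, mul_le_mul_of_nonneg_left hsqrt hP.le,
        mul_pos hP (lt_of_lt_of_le one_pos hX1)]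

theorem stmt_13 (m : ℝ) (hm : 0 < m) (a : ℤ) :
    ∫ t in (0 : ℝ)..m, Real.exp (-m ^ 2 / t ^ 2) * t ^ (a - 1) ≤
      m ^ a * Real.sqrt (Nat.factorial (-a).toNat) := by
  rcases le_or_gt a 0 with ha | ha
  · obtain ⟨k, hk⟩ : ∃ k : ℕ, a = -(k:ℤ) := ⟨(-a).toNat, by omega⟩
    subst hk
    have h1 : (-(-(k:ℤ))).toNat = k := by omega
    rw [h1]
    exact main_nat hm k
  · have := intle hm (a-1) 1 (by omega) le_rfl
    refine this.trans ?_
    have h0 : (-a).toNat = 0 := by omega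
    rw [h0, show (Nat.factorial 0 : ℝ) = 1 from by norm_num, Real.sqrt_one, mul_one,
      show (Nat.factorial 1 : ℝ) = 1 from by norm_num, one_mul]
    rw [zpow_sub_one₀ hm.ne', mul_assoc, inv_mul_cancel₀ hm.ne', mul_one]
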